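/- For x > 1 and every positive integer k, (2/π) ∫_{0}^{π} log(1 - cos θ / x) · cos(k θ) dθ = -2 νᵏ / k, where ν := x - √(x² - 1). -/

import Mathlib

open Real intervalIntegral

lemma int_cos_int (m : ℤ) : ∫ θ in (0:ℝ)..π, Real.cos (m * θ) = if m = 0 then π else 0 := by
  rcases eq_or_ne m 0 with h | h
  · simp [h]
  · have hm : (m:ℝ) ≠ 0 := Int.cast_ne_zero.mpr h
    rw [if_neg h, intervalIntegral.integral_comp_mul_left Real.cos hm]
    simp [Real.sin_int_mul_pi]

lemma orth (n k : ℕ) (hk : 0 < k) :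
    ∫ θ in (0:ℝ)..π, Real.sin (n * θ) * Real.sin (k * θ) = if n = k then π / 2 else 0 := by
  have h1 : ∀ θ : ℝ, Real.sin (n * θ) * Real.sin (k * θ)
      = (Real.cos (((n - k : ℤ) : ℝ) * θ) - Real.cos (((n + k : ℤ) : ℝ) * θ)) / 2 := by
    intro θ
    have := Real.two_mul_sin_mul_sin (n * θ) (k * θ)
    push_cast
    rw [sub_mul, add_mul]
    linarith
  simp_rw [h1]
  rw [intervalIntegral.integral_div, intervalIntegral.integral_sub
    (Continuous.intervalIntegrable (by continuity) _ _)
    (Continuous.intervalIntegrable (by continuity) _ _), int_cos_int, int_cos_int]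
  have h2 : (n:ℤ) + k ≠ 0 := by positivity
  rw [if_neg h2]
  rcases eq_or_ne n k with h | h
  · simp [h]
  · rw [if_neg (sub_ne_zero.mpr (by exact_mod_cast h)), if_neg h]
    norm_num
open Real

lemma series_eq (x ν : ℝ) (hx : 1 < x) (hν0 : 0 < ν) (hν1 : ν < 1)
    (hrel : ν ^ 2 + 1 = 2 * x * ν) (θ : ℝ) :
    HasSum (fun n : ℕ => 2 * ν ^ (n + 1) * Real.sin ((n + 1) * θ))
      (Real.sin θ / (x - Real.cos θ)) := by
  set z : ℂ := ν * Complex.exp (θ * Complex.I) with hz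
  have hre : z.re = ν * Real.cos θ := by
    simp [hz, Complex.mul_re, Complex.exp_ofReal_mul_I_re, Complex.exp_ofReal_mul_I_im]
  have him' : z.im = ν * Real.sin θ := by
    simp [hz, Complex.mul_im, Complex.exp_ofReal_mul_I_re, Complex.exp_ofReal_mul_I_im]
  have hznorm : ‖z‖ = ν := by
    rw [hz, norm_mul, Complex.norm_real, Complex.norm_exp_ofReal_mul_I]
    simp [abs_of_pos hν0]
  have hlt : ‖z‖ < 1 := by rw [hznorm]; exact hν1
  have hgeo : HasSum (fun n : ℕ => z ^ (n + 1)) (z * (1 - z)⁻¹) := by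
    have := (hasSum_geometric_of_norm_lt_one hlt).mul_left z
    simpa [pow_succ, mul_comm] using this
  have him : HasSum (fun n : ℕ => (z ^ (n + 1)).im) ((z * (1 - z)⁻¹).im) :=
    Complex.hasSum_im hgeo
  have hzpow : ∀ n : ℕ, (z ^ (n + 1)).im = ν ^ (n + 1) * Real.sin ((n + 1) * θ) := by
    intro n
    rw [hz, mul_pow, ← Complex.exp_nat_mul,
      show ((n+1:ℕ):ℂ) * (θ * Complex.I) = ((((n:ℝ)+1) * θ : ℝ) : ℂ) * Complex.I by
        push_cast; ring,
      ← Complex.ofReal_pow, Complex.mul_im]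
    simp only [Complex.ofReal_re, Complex.ofReal_im, Complex.exp_ofReal_mul_I_re,
      Complex.exp_ofReal_mul_I_im, zero_mul, add_zero, mul_zero]

  have hcos : 0 < x - Real.cos θ := by nlinarith [Real.cos_le_one θ]
  have hsc := Real.sin_sq_add_cos_sq θ
  have hd : Complex.normSq (1 - z) = 2 * ν * (x - Real.cos θ) := by
    rw [Complex.normSq_apply, Complex.sub_re, Complex.sub_im, hre, him']
    simp only [Complex.one_re, Complex.one_im]
    nlinarith
  have h1z : (1:ℂ) - z ≠ 0 := by
    intro h
    rw [sub_eq_zero] at h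
    rw [← h] at hlt
    simp at hlt
  have hval : (z * (1 - z)⁻¹).im = Real.sin θ / (2 * (x - Real.cos θ)) := by
    rw [← div_eq_mul_inv, Complex.div_im, hd, Complex.sub_re, Complex.sub_im, hre, him']
    simp only [Complex.one_re, Complex.one_im]
    have hne : (2 * ν * (x - Real.cos θ)) ≠ 0 := by positivity
    field_simp
    ring_nf
  have := him
  simp_rw [hzpow] at this
  rw [hval] at this
  have h2 := this.mul_left 2
  have h3 : 2 * (Real.sin θ / (2 * (x - Real.cos θ))) = Real.sin θ / (x - Real.cos θ) := by
    rw [eq_div_iff (ne_of_gt hcos)]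
    field_simp
  rw [h3] at h2
  simpa [mul_assoc] using h2

lemma keyB (x ν : ℝ) (hx : 1 < x) (hν0 : 0 < ν) (hν1 : ν < 1)
    (hrel : ν ^ 2 + 1 = 2 * x * ν) (k : ℕ) (hk : 0 < k) :
    ∫ θ in (0:ℝ)..π, Real.sin θ * Real.sin (k * θ) / (x - Real.cos θ) = π * ν ^ k := by
  have hcos : ∀ θ : ℝ, 0 < x - Real.cos θ := fun θ => by nlinarith [Real.cos_le_one θ]
  have hsum : HasSum
      (fun n : ℕ => ∫ θ in (0:ℝ)..π, 2 * ν ^ (n+1) * Real.sin ((n+1) * θ) * Real.sin (k * θ))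
      (∫ θ in (0:ℝ)..π, Real.sin θ * Real.sin (k * θ) / (x - Real.cos θ)) := by
    apply intervalIntegral.hasSum_integral_of_dominated_convergence
      (bound := fun n _ => 2 * ν ^ (n+1))
    · intro n
      exact Continuous.aestronglyMeasurable (by continuity)
    · intro n
      filter_upwards with t ht
      calc ‖2 * ν ^ (n+1) * Real.sin ((n+1) * t) * Real.sin (k * t)‖
          = 2 * ν ^ (n+1) * (|Real.sin ((n+1) * t)| * |Real.sin (k * t)|) := by
            rw [norm_eq_abs]
            rw [abs_mul, abs_mul]
            rw [abs_of_pos (by positivity : (0:ℝ) < 2 * ν ^ (n+1))]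
            ring
        _ ≤ 2 * ν ^ (n+1) * (1 * 1) := by
            gcongr
            · exact Real.abs_sin_le_one _
            · exact Real.abs_sin_le_one _
        _ = 2 * ν ^ (n+1) := by ring
    · filter_upwards with t ht
      exact (summable_geometric_of_lt_one hν0.le hν1).mul_left 2 |>.comp_injective
        (add_left_injective 1) |>.congr (by intro n; simp [pow_succ]) |>.congr (fun n => rfl)
    · exact intervalIntegrable_const
    · filter_upwards with t ht
      have h := (series_eq x ν hx hν0 hν1 hrel t).mul_right (Real.sin (k * t))
      rw [div_mul_eq_mul_div] at h
      convert h using 2 with n <;> (try push_cast) <;> (try ring)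
  have hint : ∀ n : ℕ, (∫ θ in (0:ℝ)..π, 2 * ν ^ (n+1) * Real.sin ((n+1) * θ) * Real.sin (k * θ))
      = if n = k - 1 then π * ν ^ k else 0 := by
    intro n
    have heq : (fun θ : ℝ => 2 * ν ^ (n+1) * Real.sin ((n+1) * θ) * Real.sin (k * θ))
        = fun θ : ℝ => (2 * ν ^ (n+1)) * (Real.sin (((n+1:ℕ):ℝ) * θ) * Real.sin (k * θ)) := by
      funext θ; push_cast; ring
    rw [heq, intervalIntegral.integral_const_mul, orth (n+1) k hk]
    rcases eq_or_ne (n+1) k with h | h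
    · rw [if_pos h, if_pos (by omega), ← h]
      ring
    · rw [if_neg h, if_neg (by omega), mul_zero]
  simp only [hint] at hsum
  exact hsum.unique (hasSum_ite_eq _ _)

theorem stmt_6 (x : ℝ) (hx : 1 < x) (ν : ℝ) (hν : ν = x - Real.sqrt (x ^ 2 - 1))
    (k : ℕ) (hk : 0 < k) :
    (2 / π) * ∫ θ in (0 : ℝ)..π, Real.log (1 - Real.cos θ / x) * Real.cos (k * θ) =
      -2 * ν ^ k / k := by
  have hs2 : Real.sqrt (x ^ 2 - 1) ^ 2 = x ^ 2 - 1 := Real.sq_sqrt (by nlinarith)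
  have hν0 : 0 < ν := by
    rw [hν, sub_pos]
    exact (Real.sqrt_lt' (by linarith)).mpr (by nlinarith)
  have hν1 : ν < 1 := by
    have h : x - 1 < Real.sqrt (x ^ 2 - 1) := by
      exact (Real.lt_sqrt (by linarith)).mpr (by nlinarith)
    rw [hν]; linarith
  have hrel : ν ^ 2 + 1 = 2 * x * ν := by rw [hν]; nlinarith [hs2]
  have hcos : ∀ θ : ℝ, 0 < x - Real.cos θ := fun θ => by nlinarith [Real.cos_le_one θ]
  have hx0 : (0:ℝ) < x := by linarith
  have hlog : ∀ θ : ℝ, 0 < 1 - Real.cos θ / x := fun θ => by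
    rw [sub_pos, div_lt_one hx0]; nlinarith [Real.cos_le_one θ]
  have hk0 : (k:ℝ) ≠ 0 := Nat.cast_ne_zero.mpr hk.ne'
  have hu : ∀ θ : ℝ, HasDerivAt (fun θ => Real.log (1 - Real.cos θ / x))
      (Real.sin θ / (x - Real.cos θ)) θ := by
    intro θ
    have h1 : HasDerivAt (fun θ : ℝ => 1 - Real.cos θ / x) (Real.sin θ / x) θ := by
      simpa [neg_div] using ((Real.hasDerivAt_cos θ).div_const x).const_sub 1
    have h2 := h1.log (ne_of_gt (hlog θ))
    convert h2 using 1
    have hA : x - Real.cos θ ≠ 0 := (hcos θ).ne'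
    have hB : x ≠ 0 := hx0.ne'
    have hC : 1 - Real.cos θ / x ≠ 0 := (hlog θ).ne'
    have hD : 0 < -(x * Real.cos θ) + x ^ 2 := by nlinarith [hcos θ]
    field_simp [hA, hB, hC, hD.ne']
  have hv : ∀ θ : ℝ, HasDerivAt (fun θ => Real.sin (k * θ) / k) (Real.cos (k * θ)) θ := by
    intro θ
    have h2 : HasDerivAt (fun θ : ℝ => (k:ℝ) * θ) k θ := by
      simpa using (hasDerivAt_id θ).const_mul (k:ℝ)
    have h3 := (Real.hasDerivAt_sin ((k:ℝ) * θ)).comp θ h2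
    have h4 := h3.div_const (k:ℝ)
    convert h4 using 1
    all_goals first | rfl | field_simp [hk0]
  have hu'cont : Continuous fun θ : ℝ => Real.sin θ / (x - Real.cos θ) :=
    Real.continuous_sin.div (by continuity) fun θ => (hcos θ).ne'
  have hparts := intervalIntegral.integral_mul_deriv_eq_deriv_mul (a := 0) (b := π)
    (u := fun θ => Real.log (1 - Real.cos θ / x)) (v := fun θ => Real.sin (k * θ) / k)
    (u' := fun θ => Real.sin θ / (x - Real.cos θ)) (v' := fun θ => Real.cos (k * θ))
    (fun θ _ => hu θ) (fun θ _ => hv θ)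
    (Continuous.intervalIntegrable hu'cont _ _)
    (Continuous.intervalIntegrable (by continuity) _ _)
  rw [hparts]
  have hB := keyB x ν hx hν0 hν1 hrel k hk
  have h5 : (∫ θ in (0:ℝ)..π, Real.sin θ / (x - Real.cos θ) * (Real.sin (k * θ) / k))
      = (π * ν ^ k) / k := by
    have heq : (fun θ : ℝ => Real.sin θ / (x - Real.cos θ) * (Real.sin (k * θ) / k))
        = fun θ : ℝ => (Real.sin θ * Real.sin (k * θ) / (x - Real.cos θ)) * (1 / k) := by
      funext θ; ring
    rw [heq, intervalIntegral.integral_mul_const, hB]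
    field_simp
  rw [h5]
  simp only [Real.sin_nat_mul_pi, Real.sin_zero, zero_div, mul_zero, zero_mul, sub_zero, zero_sub]
  rw [div_mul_eq_mul_div, mul_neg, neg_div, show (-2 : ℝ) * ν ^ k / k = -(2 * ν ^ k / k) by ring,
    neg_inj, div_eq_div_iff Real.pi_ne_zero hk0]
  field_simp
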